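/- Let f : ℝᴺ × ℝⁿ × ℝ → ℝᴺ be a uniform contraction in its first argument with constant θ ∈ (0,1), with image contained in a compact set, and let h : ℝᴺ → ℝ be uniformly continuous. Fix bi-infinite inputs u : ℤ → ℝⁿ, e : ℤ → ℝ, a time k ∈ ℤ, and an initial condition ξ ∈ ℝᴺ. For k₀ ≤ k let φ(k; k₀, ξ) denote the solution at time k of x_{j+1} = f(x_j, u_j, e_j) started at x_{k₀} = ξ. Then the sequence {h(φ(k; k₀, ξ))}_{k₀ ≤ k} converges as k₀ → −∞, and the limit is independent of ξ. -/

import Mathlib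

/-- The forward solution: `sol f u e ξ k₀ m = φ(k₀+m; k₀, ξ)`. -/
noncomputable def sol {N n : ℕ}
    (f : EuclideanSpace ℝ (Fin N) → EuclideanSpace ℝ (Fin n) → ℝ → EuclideanSpace ℝ (Fin N))
    (u : ℤ → EuclideanSpace ℝ (Fin n)) (e : ℤ → ℝ)
    (ξ : EuclideanSpace ℝ (Fin N)) (k₀ : ℤ) : ℕ → EuclideanSpace ℝ (Fin N)
  | 0 => ξ
  | m + 1 => f (sol f u e ξ k₀ m) (u (k₀ + m)) (e (k₀ + m))

lemma sol_shift {N n : ℕ}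
    (f : EuclideanSpace ℝ (Fin N) → EuclideanSpace ℝ (Fin n) → ℝ → EuclideanSpace ℝ (Fin N))
    (u : ℤ → EuclideanSpace ℝ (Fin n)) (e : ℤ → ℝ) :
    ∀ (m : ℕ) (ξ : EuclideanSpace ℝ (Fin N)) (k₀ : ℤ),
      sol f u e ξ k₀ (m + 1) = sol f u e (f ξ (u k₀) (e k₀)) (k₀ + 1) m := by
  intro m
  induction m with
  | zero => intro ξ k₀; simp [sol]
  | succ m ih =>
      intro ξ k₀
      show f (sol f u e ξ k₀ (m+1)) (u (k₀ + (m+1 : ℕ))) (e (k₀ + (m+1 : ℕ)))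
        = f (sol f u e (f ξ (u k₀) (e k₀)) (k₀+1) m) (u (k₀ + 1 + m)) (e (k₀ + 1 + m))
      rw [ih]
      congr 2 <;> push_cast <;> ring

lemma sol_contract {N n : ℕ} (θ : ℝ)
    (f : EuclideanSpace ℝ (Fin N) → EuclideanSpace ℝ (Fin n) → ℝ → EuclideanSpace ℝ (Fin N))
    (hcontr : ∀ (u : EuclideanSpace ℝ (Fin n)) (e : ℝ) (x₁ x₂ : EuclideanSpace ℝ (Fin N)),
      ‖f x₁ u e - f x₂ u e‖ ≤ θ * ‖x₁ - x₂‖)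
    (hθ0 : 0 ≤ θ)
    (u : ℤ → EuclideanSpace ℝ (Fin n)) (e : ℤ → ℝ) :
    ∀ (m : ℕ) (ξ ξ' : EuclideanSpace ℝ (Fin N)) (k₀ : ℤ),
      ‖sol f u e ξ k₀ m - sol f u e ξ' k₀ m‖ ≤ θ ^ m * ‖ξ - ξ'‖ := by
  intro m
  induction m with
  | zero => intro ξ ξ' k₀; simp [sol]
  | succ m ih =>
      intro ξ ξ' k₀
      calc ‖sol f u e ξ k₀ (m+1) - sol f u e ξ' k₀ (m+1)‖
          ≤ θ * ‖sol f u e ξ k₀ m - sol f u e ξ' k₀ m‖ := hcontr _ _ _ _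
        _ ≤ θ * (θ ^ m * ‖ξ - ξ'‖) := by
            exact mul_le_mul_of_nonneg_left (ih ξ ξ' k₀) hθ0
        _ = θ ^ (m+1) * ‖ξ - ξ'‖ := by ring

theorem stmt3 {N n : ℕ} (θ : ℝ) (hθ : θ ∈ Set.Ioo (0:ℝ) 1)
    (f : EuclideanSpace ℝ (Fin N) → EuclideanSpace ℝ (Fin n) → ℝ → EuclideanSpace ℝ (Fin N))
    (hcontr : ∀ (u : EuclideanSpace ℝ (Fin n)) (e : ℝ) (x₁ x₂ : EuclideanSpace ℝ (Fin N)),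
      ‖f x₁ u e - f x₂ u e‖ ≤ θ * ‖x₁ - x₂‖)
    (K : Set (EuclideanSpace ℝ (Fin N))) (hK : IsCompact K)
    (hrange : ∀ x u e, f x u e ∈ K)
    (h : EuclideanSpace ℝ (Fin N) → ℝ) (hh : UniformContinuous h)
    (u : ℤ → EuclideanSpace ℝ (Fin n)) (e : ℤ → ℝ) (k : ℤ) :
    ∃ l : ℝ, ∀ ξ : EuclideanSpace ℝ (Fin N),
      Filter.Tendsto (fun j : ℕ => h (sol f u e ξ (k - j) j)) Filter.atTop (nhds l) := by
  obtain ⟨hθ0, hθ1⟩ := hθ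
  have hθ0' : (0:ℝ) ≤ θ := le_of_lt hθ0
  -- bound on K
  obtain ⟨R, hR⟩ := hK.isBounded.subset_closedBall 0
  set ξ₀ : EuclideanSpace ℝ (Fin N) := 0 with hξ₀
  set x : ℕ → EuclideanSpace ℝ (Fin N) := fun j => sol f u e ξ₀ (k - j) j with hx
  have key : ∀ j : ℕ, dist (x j) (x (j+1)) ≤ R * θ ^ j := by
    intro j
    have hshift : x (j+1) = sol f u e (f ξ₀ (u (k - (j+1:ℕ))) (e (k - (j+1:ℕ)))) (k - j) j := by
      have := sol_shift f u e j ξ₀ (k - (j+1:ℕ))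
      have harg : (k - ((j:ℤ)+1)) + 1 = k - j := by ring
      simpa [harg, hx] using this
    rw [hshift, dist_eq_norm]
    calc ‖sol f u e ξ₀ (k - j) j - sol f u e (f ξ₀ _ _) (k - j) j‖
        ≤ θ ^ j * ‖ξ₀ - f ξ₀ (u (k - (j+1:ℕ))) (e (k - (j+1:ℕ)))‖ :=
          sol_contract θ f hcontr hθ0' u e j _ _ _
      _ ≤ θ ^ j * R := by
          apply mul_le_mul_of_nonneg_left _ (pow_nonneg hθ0' j)
          have hmem := hR (hrange ξ₀ (u (k - (j+1:ℕ))) (e (k - (j+1:ℕ))))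
          rw [Metric.mem_closedBall, dist_zero_right] at hmem
          simpa [hξ₀, norm_sub_rev] using hmem
      _ = R * θ ^ j := by ring
  have hcauchy : CauchySeq x := cauchySeq_of_le_geometric θ R hθ1 key
  obtain ⟨L, hL⟩ := cauchySeq_tendsto_of_complete hcauchy
  refine ⟨h L, fun ξ => ?_⟩
  have hxi : Filter.Tendsto (fun j : ℕ => sol f u e ξ (k - j) j) Filter.atTop (nhds L) := by
    rw [tendsto_iff_dist_tendsto_zero]
    have hbd : ∀ j : ℕ, dist (sol f u e ξ (k - j) j) L ≤ θ ^ j * ‖ξ - ξ₀‖ + dist (x j) L := by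
      intro j
      calc dist (sol f u e ξ (k - j) j) L
          ≤ dist (sol f u e ξ (k - j) j) (x j) + dist (x j) L := dist_triangle _ _ _
        _ ≤ θ ^ j * ‖ξ - ξ₀‖ + dist (x j) L := by
            gcongr
            rw [dist_eq_norm]
            exact sol_contract θ f hcontr hθ0' u e j _ _ _
    have hlim : Filter.Tendsto (fun j : ℕ => θ ^ j * ‖ξ - ξ₀‖ + dist (x j) L)
        Filter.atTop (nhds 0) := by
      have h1 : Filter.Tendsto (fun j : ℕ => θ ^ j * ‖ξ - ξ₀‖) Filter.atTop (nhds 0) := by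
        simpa using (tendsto_pow_atTop_nhds_zero_of_lt_one hθ0' hθ1).mul_const ‖ξ - ξ₀‖
      have h2 : Filter.Tendsto (fun j : ℕ => dist (x j) L) Filter.atTop (nhds 0) :=
        tendsto_iff_dist_tendsto_zero.mp hL
      simpa using h1.add h2
    exact squeeze_zero (fun j => dist_nonneg) hbd hlim
  exact (hh.continuous.tendsto L).comp hxi
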